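/- Let n ∈ ℕ and A ∈ M_n(ℂ). If every eigenvalue of A has real part ≤ 0, and every eigenvalue with real part equal to 0 is a simple root of the characteristic polynomial of A, then the family {exp(tA) : t ≥ 0} is bounded in norm, so every solution t ↦ exp(tA)·x₀ of x′ = A·x remains bounded for t ≥ 0. -/

import Mathlib

open NormedSpace

attribute [local instance] Matrix.linftyOpNormedAddCommGroup
  Matrix.linftyOpNormedRing Matrix.linftyOpNormedAlgebra

open Polynomial Finset Nat Matrix

namespace PoincareStabAux

variable {n : ℕ}

/-- `B ↦ B *ᵥ y` as a continuous linear map. -/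
noncomputable def mulVecCLM (n : ℕ) (y : Fin n → ℂ) :
    Matrix (Fin n) (Fin n) ℂ →L[ℂ] (Fin n → ℂ) :=
  LinearMap.toContinuousLinearMap
    { toFun := fun B => B *ᵥ y
      map_add' := fun B C => Matrix.add_mulVec B C y
      map_smul' := fun c B => Matrix.smul_mulVec c B y }

@[simp] lemma mulVecCLM_apply (y : Fin n → ℂ) (B : Matrix (Fin n) (Fin n) ℂ) :
    mulVecCLM n y B = B *ᵥ y := rfl

lemma exp_mulVec_eq (A : Matrix (Fin n) (Fin n) ℂ) (α : ℂ) (k : ℕ) (y : Fin n → ℂ)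
    (hk : ((A - α • 1) ^ k) *ᵥ y = 0) (z : ℂ) :
    exp (z • A) *ᵥ y =
      Complex.exp (z * α) •
        ∑ j ∈ Finset.range k, ((z ^ j * ((j ! : ℂ))⁻¹) • ((A - α • 1) ^ j *ᵥ y)) := by
  set N : Matrix (Fin n) (Fin n) ℂ := A - α • 1 with hN
  have hsplit : z • A = algebraMap ℂ (Matrix (Fin n) (Fin n) ℂ) (z * α) + z • N := by
    rw [Algebra.algebraMap_eq_smul_one, hN, smul_sub, smul_smul]
    abel
  have hcomm : Commute (algebraMap ℂ (Matrix (Fin n) (Fin n) ℂ) (z * α)) (z • N) :=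
    Algebra.commutes _ _
  have hzero : ∀ j : ℕ, k ≤ j → N ^ j *ᵥ y = 0 := by
    intro j hj
    have h : N ^ j = N ^ (j - k) * N ^ k := by rw [← pow_add]; congr 1; omega
    rw [h, ← Matrix.mulVec_mulVec, hk, Matrix.mulVec_zero]
  have hexpN : exp (z • N) *ᵥ y =
      ∑ j ∈ Finset.range k, ((z ^ j * ((j ! : ℂ))⁻¹) • (N ^ j *ᵥ y)) := by
    have hsumm := expSeries_summable' (𝕂 := ℂ) (z • N)
    have hmap := (mulVecCLM n y).map_tsum hsumm
    have h : exp (z • N) *ᵥ y = ∑' j : ℕ, ((j ! : ℂ))⁻¹ • ((z • N) ^ j *ᵥ y) := by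
      rw [exp_eq_tsum (𝕂 := ℂ)]
      simpa using hmap
    rw [h]
    rw [tsum_eq_sum (s := Finset.range k) (f := fun j => ((j ! : ℂ))⁻¹ • ((z • N) ^ j *ᵥ y))
      (by
        intro j hj
        rw [Finset.mem_range, not_lt] at hj
        show ((j ! : ℂ))⁻¹ • ((z • N) ^ j *ᵥ y) = 0
        rw [_root_.smul_pow, Matrix.smul_mulVec, hzero j hj, smul_zero, smul_zero])]
    refine Finset.sum_congr rfl fun j hj => ?_
    rw [_root_.smul_pow, Matrix.smul_mulVec, smul_smul, mul_comm]
  calc exp (z • A) *ᵥ y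
      = (algebraMap ℂ (Matrix (Fin n) (Fin n) ℂ) (Complex.exp (z * α)) * exp (z • N)) *ᵥ y := by
        rw [hsplit, Matrix.exp_add_of_commute _ _ hcomm, Complex.exp_eq_exp_ℂ]
        exact congrArg (fun M => (M * exp (z • N)) *ᵥ y) (algebraMap_exp_comm (z * α)).symm
    _ = Complex.exp (z * α) • (exp (z • N) *ᵥ y) := by
        rw [Algebra.algebraMap_eq_smul_one, smul_mul_assoc, one_mul,
          Matrix.smul_mulVec]
    _ = _ := by rw [hexpN]

lemma exp_neg_mul_pow_le {β : ℝ} (hβ : 0 < β) (j : ℕ) {t : ℝ} (ht : 0 ≤ t) :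
    Real.exp (-(β * t)) * t ^ j ≤ (j ! : ℝ) / β ^ j := by
  have h1 : (β * t) ^ j / (j ! : ℝ) ≤ Real.exp (β * t) :=
    Real.pow_div_factorial_le_exp (x := β * t) (by positivity) j
  have hfac : (0 : ℝ) < (j ! : ℝ) := by positivity
  have h2 : β ^ j * t ^ j ≤ Real.exp (β * t) * (j ! : ℝ) := by
    rw [← mul_pow]
    calc (β * t) ^ j = ((β * t) ^ j / (j ! : ℝ)) * (j ! : ℝ) := by field_simp
      _ ≤ Real.exp (β * t) * (j ! : ℝ) := mul_le_mul_of_nonneg_right h1 hfac.le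
  have hexp : (0 : ℝ) < Real.exp (β * t) := Real.exp_pos _
  rw [Real.exp_neg]
  rw [le_div_iff₀ (by positivity : (0:ℝ) < β ^ j)]
  rw [inv_mul_eq_div, div_mul_eq_mul_div, div_le_iff₀ hexp]
  calc t ^ j * β ^ j = β ^ j * t ^ j := by ring
    _ ≤ Real.exp (β * t) * (j ! : ℝ) := h2
    _ = (j ! : ℝ) * Real.exp (β * t) := by ring

lemma mulVec_eq_zero_of_rootMultiplicity_one (A : Matrix (Fin n) (Fin n) ℂ) (α : ℂ)
    (hmul : (Matrix.charpoly A).rootMultiplicity α = 1) (y : Fin n → ℂ) (k : ℕ)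
    (hk : ((A - α • 1) ^ k) *ᵥ y = 0) : (A - α • (1 : Matrix (Fin n) (Fin n) ℂ)) *ᵥ y = 0 := by
  classical
  set p := Matrix.charpoly A with hp
  have hp0 : p ≠ 0 := (Matrix.charpoly_monic A).ne_zero
  set q := p /ₘ (X - C α) ^ 1 with hqdef
  have hpq : (X - C α) ^ 1 * q = p := by
    have h := Polynomial.pow_mul_divByMonic_rootMultiplicity_eq p α
    rwa [hmul] at h
  have hqα : q.eval α ≠ 0 := by
    have h := Polynomial.eval_divByMonic_pow_rootMultiplicity_ne_zero α hp0
    rwa [hmul] at h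
  have hcop : IsCoprime ((X - C α) ^ k) q := by
    refine IsCoprime.pow_left ?_
    refine (Polynomial.irreducible_X_sub_C α).coprime_iff_not_dvd.mpr ?_
    intro hdvd
    exact hqα ((Polynomial.dvd_iff_isRoot).mp hdvd)
  obtain ⟨u, v, huv⟩ := hcop
  have hXC : Polynomial.aeval A (X - C α) = A - α • 1 := by
    simp [_root_.map_sub, Polynomial.aeval_X, Polynomial.aeval_C, Algebra.algebraMap_eq_smul_one]
  have haev : Polynomial.aeval A u * (A - α • 1) ^ k + Polynomial.aeval A v * Polynomial.aeval A q
      = 1 := by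
    have h := congrArg (Polynomial.aeval A) huv
    simpa [_root_.map_add, _root_.map_mul, _root_.map_pow, hXC] using h
  have hy : (Polynomial.aeval A v * Polynomial.aeval A q) *ᵥ y = y := by
    have h := congrArg (fun B => B *ᵥ y) haev
    simp only [Matrix.add_mulVec, Matrix.one_mulVec] at h
    rw [← Matrix.mulVec_mulVec, hk, Matrix.mulVec_zero, zero_add] at h
    exact h
  have hzero : (A - α • 1) * (Polynomial.aeval A v * Polynomial.aeval A q) = 0 := by
    have h1 : (A - α • (1 : Matrix (Fin n) (Fin n) ℂ)) *
        (Polynomial.aeval A v * Polynomial.aeval A q)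
        = Polynomial.aeval A ((X - C α) * (v * q)) := by
      rw [_root_.map_mul, _root_.map_mul, hXC]
    have h2 : (X - C α) * (v * q) = v * ((X - C α) ^ 1 * q) := by ring
    rw [h1, h2, hpq, _root_.map_mul, hp, Matrix.aeval_self_charpoly, mul_zero]
  calc (A - α • (1 : Matrix (Fin n) (Fin n) ℂ)) *ᵥ y
      = (A - α • 1) *ᵥ ((Polynomial.aeval A v * Polynomial.aeval A q) *ᵥ y) := by rw [hy]
    _ = ((A - α • 1) * (Polynomial.aeval A v * Polynomial.aeval A q)) *ᵥ y := by
        rw [Matrix.mulVec_mulVec]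
    _ = 0 := by rw [hzero, Matrix.zero_mulVec]

lemma real_smul_eq (A : Matrix (Fin n) (Fin n) ℂ) (t : ℝ) :
    t • A = ((t : ℂ)) • A := by
  rw [← algebraMap_smul ℂ t A, Complex.coe_algebraMap]

/-- Per-vector boundedness. -/
lemma pointwise_bound (A : Matrix (Fin n) (Fin n) ℂ)
    (h1 : ∀ α ∈ spectrum ℂ A, α.re ≤ 0)
    (h2 : ∀ α ∈ spectrum ℂ A, α.re = 0 →
      (Matrix.charpoly A).rootMultiplicity α = 1)
    (x : Fin n → ℂ) :
    ∃ C : ℝ, ∀ t : ℝ, 0 ≤ t → ‖exp (t • A) *ᵥ x‖ ≤ C := by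
  classical
  set f : Module.End ℂ (Fin n → ℂ) := Matrix.toLinAlgEquiv' A with hf
  have htop := Module.End.iSup_maxGenEigenspace_eq_top f
  have hx : x ∈ ⨆ μ : ℂ, f.maxGenEigenspace μ := by rw [htop]; trivial
  obtain ⟨c, hc, hsum⟩ := (Submodule.mem_iSup_iff_exists_finsupp _ x).mp hx
  -- translate membership to a matrix statement
  have hmat : ∀ μ : ℂ, ∃ k : ℕ, ((A - μ • 1) ^ k) *ᵥ c μ = 0 := by
    intro μ
    obtain ⟨k, hk⟩ := (Module.End.mem_maxGenEigenspace f μ (c μ)).mp (hc μ)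
    refine ⟨k, ?_⟩
    have heq : (f - μ • 1) ^ k = Matrix.toLinAlgEquiv' ((A - μ • 1) ^ k) := by
      rw [_root_.map_pow, _root_.map_sub, _root_.map_smul, _root_.map_one, hf]
    rw [heq, Matrix.toLinAlgEquiv'_apply] at hk
    exact hk
  -- per eigenvalue bound
  have key : ∀ μ : ℂ, ∃ D : ℝ, ∀ t : ℝ, 0 ≤ t → ‖exp (t • A) *ᵥ c μ‖ ≤ D := by
    intro μ
    by_cases hcμ : c μ = 0
    · exact ⟨0, fun t _ => by rw [hcμ, Matrix.mulVec_zero]; simp⟩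
    obtain ⟨k, hk⟩ := hmat μ
    -- μ is in the spectrum of A
    have hμspec : μ ∈ spectrum ℂ A := by
      have hgen : f.HasGenEigenvalue μ k := by
        rw [Module.End.HasGenEigenvalue]
        refine Submodule.ne_bot_iff _ |>.mpr ⟨c μ, ?_, hcμ⟩
        rw [Module.End.mem_genEigenspace_nat, LinearMap.mem_ker]
        have heq : (f - μ • 1) ^ k = Matrix.toLinAlgEquiv' ((A - μ • 1) ^ k) := by
          rw [_root_.map_pow, _root_.map_sub, _root_.map_smul, _root_.map_one, hf]
        rw [heq, Matrix.toLinAlgEquiv'_apply]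
        exact hk
      have hev : f.HasEigenvalue μ := Module.End.hasEigenvalue_of_hasGenEigenvalue hgen
      have hsp := hev.mem_spectrum
      rwa [hf, AlgEquiv.spectrum_eq Matrix.toLinAlgEquiv' A] at hsp
    rcases lt_or_eq_of_le (h1 μ hμspec) with hre | hre
    · -- negative real part
      set β : ℝ := -μ.re with hβdef
      have hβ : 0 < β := by rw [hβdef]; linarith
      refine ⟨∑ j ∈ Finset.range k,
        ((j ! : ℝ) / β ^ j) * ((j ! : ℝ))⁻¹ * ‖(A - μ • 1) ^ j *ᵥ c μ‖, fun t ht => ?_⟩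
      rw [real_smul_eq, exp_mulVec_eq A μ k (c μ) hk (t : ℂ)]
      rw [norm_smul]
      have hnorm_exp : ‖Complex.exp ((t : ℂ) * μ)‖ = Real.exp (t * μ.re) := by
        rw [Complex.norm_exp]
        congr 1
        simp [Complex.mul_re]
      rw [hnorm_exp]
      calc Real.exp (t * μ.re) * ‖∑ j ∈ Finset.range k,
            (((t : ℂ)) ^ j * ((j ! : ℂ))⁻¹) • ((A - μ • 1) ^ j *ᵥ c μ)‖
          ≤ Real.exp (t * μ.re) * ∑ j ∈ Finset.range k,
            t ^ j * ((j ! : ℝ))⁻¹ * ‖(A - μ • 1) ^ j *ᵥ c μ‖ := by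
            refine mul_le_mul_of_nonneg_left ?_ (Real.exp_pos _).le
            refine (norm_sum_le _ _).trans ?_
            refine Finset.sum_le_sum fun j hj => ?_
            rw [norm_smul]
            refine mul_le_mul_of_nonneg_right ?_ (norm_nonneg _)
            rw [norm_mul, norm_pow]
            simp only [Complex.norm_real, Real.norm_eq_abs, Complex.norm_natCast]
            rw [abs_of_nonneg ht]
            simp
        _ = ∑ j ∈ Finset.range k,
            (Real.exp (t * μ.re) * t ^ j) * (((j ! : ℝ))⁻¹ * ‖(A - μ • 1) ^ j *ᵥ c μ‖) := by
            rw [Finset.mul_sum]; refine Finset.sum_congr rfl fun j hj => by ring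
        _ ≤ ∑ j ∈ Finset.range k,
            ((j ! : ℝ) / β ^ j) * ((j ! : ℝ))⁻¹ * ‖(A - μ • 1) ^ j *ᵥ c μ‖ := by
            refine Finset.sum_le_sum fun j hj => ?_
            have hb : Real.exp (t * μ.re) * t ^ j ≤ (j ! : ℝ) / β ^ j := by
              have hbb := exp_neg_mul_pow_le hβ j ht
              rw [show -(β * t) = t * μ.re by rw [hβdef]; ring] at hbb
              exact hbb
            calc (Real.exp (t * μ.re) * t ^ j) * (((j ! : ℝ))⁻¹ * ‖(A - μ • 1) ^ j *ᵥ c μ‖)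
                ≤ ((j ! : ℝ) / β ^ j) * (((j ! : ℝ))⁻¹ * ‖(A - μ • 1) ^ j *ᵥ c μ‖) :=
                  mul_le_mul_of_nonneg_right hb (by positivity)
              _ = ((j ! : ℝ) / β ^ j) * ((j ! : ℝ))⁻¹ * ‖(A - μ • 1) ^ j *ᵥ c μ‖ := by ring
    · -- purely imaginary eigenvalue: simple root
      have h1' : (A - μ • 1) *ᵥ c μ = 0 :=
        mulVec_eq_zero_of_rootMultiplicity_one A μ (h2 μ hμspec hre) (c μ) k hk
      have hk1 : ((A - μ • 1) ^ 1) *ᵥ c μ = 0 := by rwa [pow_one]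
      refine ⟨‖c μ‖, fun t ht => ?_⟩
      rw [real_smul_eq, exp_mulVec_eq A μ 1 (c μ) hk1 (t : ℂ)]
      rw [norm_smul]
      have hsum1 : ∑ j ∈ Finset.range 1,
          (((t : ℂ)) ^ j * ((j ! : ℂ))⁻¹) • ((A - μ • 1) ^ j *ᵥ c μ) = c μ := by
        simp [Matrix.one_mulVec]
      rw [hsum1, Complex.norm_exp]
      have hre0 : ((t : ℂ) * μ).re = 0 := by simp [Complex.mul_re, hre]
      rw [hre0, Real.exp_zero, one_mul]
  choose D hD using key
  refine ⟨∑ μ ∈ c.support, D μ, fun t ht => ?_⟩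
  have hsplit : exp (t • A) *ᵥ x = ∑ μ ∈ c.support, exp (t • A) *ᵥ c μ := by
    have hxx : x = ∑ μ ∈ c.support, c μ := by rw [← hsum]; rfl
    rw [hxx, ← Matrix.mulVecLin_apply, _root_.map_sum]
    simp [Matrix.mulVecLin_apply]
  rw [hsplit]
  refine (norm_sum_le _ _).trans ?_
  exact Finset.sum_le_sum fun μ _ => hD μ t ht

end PoincareStabAux

/-- Poincaré's temporary stability criterion: if every eigenvalue of `A` has
nonpositive real part and every purely imaginary eigenvalue is a simple root of
the characteristic polynomial, then `{exp(tA) : t ≥ 0}` is bounded in norm, so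
every solution `t ↦ exp(tA)·x₀` of `x' = A·x` stays bounded for `t ≥ 0`. -/
theorem exp_bounded_of_spectrum_nonpos_simple_imaginary (n : ℕ)
    (A : Matrix (Fin n) (Fin n) ℂ)
    (h1 : ∀ α ∈ spectrum ℂ A, α.re ≤ 0)
    (h2 : ∀ α ∈ spectrum ℂ A, α.re = 0 →
      (Matrix.charpoly A).rootMultiplicity α = 1) :
    ∃ C : ℝ, (∀ t : ℝ, 0 ≤ t → ‖exp (t • A)‖ ≤ C) ∧
      ∀ (x₀ : Fin n → ℂ) (t : ℝ), 0 ≤ t →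
        ‖(exp (t • A)).mulVec x₀‖ ≤ C * ‖x₀‖ := by
  classical
  set g : {t : ℝ // 0 ≤ t} → (Fin n → ℂ) →L[ℂ] (Fin n → ℂ) :=
    fun t => ContinuousLinearMap.mk (Matrix.mulVecLin (exp ((t : ℝ) • A))) with hg
  have hpt : ∀ x : Fin n → ℂ, ∃ C : ℝ, ∀ i : {t : ℝ // 0 ≤ t}, ‖g i x‖ ≤ C := by
    intro x
    obtain ⟨C, hC⟩ := PoincareStabAux.pointwise_bound A h1 h2 x
    exact ⟨C, fun i => hC i.1 i.2⟩
  obtain ⟨C, hC⟩ := banach_steinhaus hpt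
  have hnorm : ∀ t : ℝ, 0 ≤ t → ‖exp (t • A)‖ ≤ C := by
    intro t ht
    rw [Matrix.linfty_opNorm_eq_opNorm]
    exact hC ⟨t, ht⟩
  refine ⟨C, hnorm, fun x₀ t ht => ?_⟩
  calc ‖(exp (t • A)).mulVec x₀‖ ≤ ‖exp (t • A)‖ * ‖x₀‖ :=
        Matrix.linfty_opNorm_mulVec _ _
    _ ≤ C * ‖x₀‖ := mul_le_mul_of_nonneg_right (hnorm t ht) (norm_nonneg _)
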